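/- Let Γ and Λ be finitely generated groups whose profinite completions are isomorphic, and let p be a prime. Then the sets of conjugacy classes of representations Γ → SL(2, F̄_p) and Λ → SL(2, F̄_p) are in bijection; in particular, they have the same cardinality. -/

import Mathlib

/-- Finite-index normal subgroups of `G`, ordered by reverse inclusion. -/
def FinIndexNormal (G : Type) [Group G] : Type :=
  {N : Subgroup G // N.Normal ∧ N.FiniteIndex}

instance (G : Type) [Group G] : PartialOrder (FinIndexNormal G) :=
  PartialOrder.lift (fun N => OrderDual.toDual N.1)
    (fun _ _ h => Subtype.ext (OrderDual.toDual.injective h))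

instance (G : Type) [Group G] (N : FinIndexNormal G) : N.1.Normal := N.2.1

/-- The profinite completion of `G`, as the subgroup of the product of all finite
quotients `G ⧸ N` consisting of the compatible families. -/
def profiniteCompletionSubgroup (G : Type) [Group G] :
    Subgroup (∀ N : FinIndexNormal G, G ⧸ N.1) where
  carrier := {x | ∀ (N M : FinIndexNormal G) (h : M.1 ≤ N.1),
    QuotientGroup.map M.1 N.1 (MonoidHom.id G) h (x M) = x N}
  one_mem' := by intro N M h; simp
  mul_mem' := by
    intro x y hx hy N M h
    simp only [Pi.mul_apply, map_mul, hx N M h, hy N M h]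
  inv_mem' := by
    intro x hx N M h
    simp only [Pi.inv_apply, map_inv, hx N M h]

/-- The profinite completion of `G`. -/
def ProfiniteCompletion (G : Type) [Group G] : Type :=
  profiniteCompletionSubgroup G

instance (G : Type) [Group G] : Group (ProfiniteCompletion G) :=
  inferInstanceAs (Group (profiniteCompletionSubgroup G))

/-- Each finite quotient carries the discrete topology. -/
instance (G : Type) [Group G] (N : FinIndexNormal G) : TopologicalSpace (G ⧸ N.1) := ⊥

/-- The profinite completion carries the inverse limit topology, i.e. the topology
induced from the product of the discrete finite quotients. -/
instance (G : Type) [Group G] : TopologicalSpace (ProfiniteCompletion G) :=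
  inferInstanceAs (TopologicalSpace (profiniteCompletionSubgroup G))

/-- The canonical map `ι : G → Ĝ`, sending `g` to the family of its cosets. -/
def iotaCompletion (G : Type) [Group G] : G →* ProfiniteCompletion G where
  toFun g := ⟨fun N => QuotientGroup.mk g, by
    intro N M h
    rfl⟩
  map_one' := Subtype.ext (funext fun N => rfl)
  map_mul' x y := Subtype.ext (funext fun N => rfl)

/-- The conjugacy relation on representations `G → SL(2, k)`. -/
def repConjSetoid (G : Type) [Group G] (k : Type) [CommRing k] :
    Setoid (G →* Matrix.SpecialLinearGroup (Fin 2) k) where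
  r ρ σ := ∃ C : Matrix.SpecialLinearGroup (Fin 2) k, ∀ g : G, C * ρ g * C⁻¹ = σ g
  iseqv := by
    refine ⟨fun ρ => ⟨1, fun g => by group⟩, ?_, ?_⟩
    · rintro ρ σ ⟨C, h⟩
      exact ⟨C⁻¹, fun g => by rw [← h g]; group⟩
    · rintro ρ σ τ ⟨C, h⟩ ⟨D, h'⟩
      exact ⟨D * C, fun g => by rw [← h' g, ← h g]; group⟩

/-- The set of conjugacy classes of representations `G → SL(2, k)`. -/
def RepConjClasses (G : Type) [Group G] (k : Type) [CommRing k] : Type :=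
  Quotient (repConjSetoid G k)

section AuxMine

variable {G H K : Type} [Group G] [Group H] [Group K]

/-- The coordinate projection from the profinite completion. -/
def projCompletion (N : FinIndexNormal G) : ProfiniteCompletion G →* G ⧸ N.1 :=
  (Pi.evalMonoidHom (fun N : FinIndexNormal G => G ⧸ N.1) N).comp
    (profiniteCompletionSubgroup G).subtype

/-- Extension of a hom killing a finite-index normal subgroup to the completion. -/
def extendHom (ρ : G →* K) (N : FinIndexNormal G) (hN : N.1 ≤ ρ.ker) :
    ProfiniteCompletion G →* K :=
  (QuotientGroup.lift N.1 ρ fun n hn => (MonoidHom.mem_ker).mp (hN hn)).comp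
    (projCompletion N)

lemma extendHom_iota (ρ : G →* K) (N : FinIndexNormal G) (hN : N.1 ≤ ρ.ker) (g : G) :
    extendHom ρ N hN (iotaCompletion G g) = ρ g := rfl

lemma extendHom_congr (ρ : G →* K) (N N' : FinIndexNormal G) (h : N = N')
    (hN : N.1 ≤ ρ.ker) (hN' : N'.1 ≤ ρ.ker) :
    extendHom ρ N hN = extendHom ρ N' hN' := by subst h; rfl

lemma extendHom_apply (ρ : G →* K) (N : FinIndexNormal G) (hN : N.1 ≤ ρ.ker)
    (x : ProfiniteCompletion G) (g : G) (hg : QuotientGroup.mk g = x.1 N) :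
    extendHom ρ N hN x = ρ g := by
  have h0 : extendHom ρ N hN x
      = QuotientGroup.lift N.1 ρ (fun n hn => (MonoidHom.mem_ker).mp (hN hn)) (x.1 N) := rfl
  rw [h0, ← hg]
  rfl

lemma extendHom_kill (ρ : G →* K) (N : FinIndexNormal G) (hN : N.1 ≤ ρ.ker)
    (x : ProfiniteCompletion G) (hx : x.1 N = 1) : extendHom ρ N hN x = 1 := by
  have : projCompletion N x = 1 := hx
  simp [extendHom, this]

/-- Two homs out of the completion that each kill a basic open subgroup and agree
on the image of `ι` are equal. -/
lemma ext_of_kill (φ ψ : ProfiniteCompletion G →* K) (M M' : FinIndexNormal G)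
    (hφ : ∀ x : ProfiniteCompletion G, x.1 M = 1 → φ x = 1)
    (hψ : ∀ x : ProfiniteCompletion G, x.1 M' = 1 → ψ x = 1)
    (hag : ∀ g : G, φ (iotaCompletion G g) = ψ (iotaCompletion G g)) : φ = ψ := by
  ext x
  haveI := M.2.1
  haveI := M'.2.1
  haveI := M.2.2
  haveI := M'.2.2
  let L : FinIndexNormal G := ⟨M.1 ⊓ M'.1, inferInstance, inferInstance⟩
  obtain ⟨g, hg⟩ := QuotientGroup.mk_surjective (x.1 L)
  let y : ProfiniteCompletion G := x * (iotaCompletion G g)⁻¹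
  have hyL : y.1 L = 1 := by
    have : y.1 L = x.1 L * (QuotientGroup.mk g : G ⧸ L.1)⁻¹ := rfl
    rw [this, ← hg, mul_inv_cancel]
  have hyM : y.1 M = 1 := by
    rw [← y.2 M L inf_le_left, hyL, map_one]
  have hyM' : y.1 M' = 1 := by
    rw [← y.2 M' L inf_le_right, hyL, map_one]
  have hx : x = y * iotaCompletion G g := (inv_mul_cancel_right x _).symm
  calc φ x = φ (y * iotaCompletion G g) := by rw [← hx]
    _ = φ y * φ (iotaCompletion G g) := map_mul φ y _
    _ = ψ y * ψ (iotaCompletion G g) := by rw [hφ y hyM, hψ y hyM', hag]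
    _ = ψ (y * iotaCompletion G g) := (map_mul ψ y _).symm
    _ = ψ x := by rw [← hx]

instance (N : FinIndexNormal G) : DiscreteTopology (G ⧸ N.1) := ⟨rfl⟩

lemma basic_isOpen (N : FinIndexNormal G) :
    IsOpen {x : ProfiniteCompletion G | x.1 N = 1} := by
  have hc : Continuous (fun x : ProfiniteCompletion G => x.1 N) :=
    (continuous_apply N).comp continuous_subtype_val
  exact (isOpen_discrete {(1 : G ⧸ N.1)}).preimage hc

/-- Every open set containing `1` in the profinite completion contains a basic
open subgroup. -/
lemma exists_kill_of_isOpen {W : Set (ProfiniteCompletion G)} (hW : IsOpen W)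
    (h1 : (1 : ProfiniteCompletion G) ∈ W) :
    ∃ M : FinIndexNormal G, ∀ x : ProfiniteCompletion G, x.1 M = 1 → x ∈ W := by
  obtain ⟨W', hW', hWeq⟩ := isOpen_induced_iff.mp hW
  rw [← hWeq] at h1
  obtain ⟨I, u, hu, hsub⟩ := isOpen_pi_iff.mp hW' _ h1
  have hnormal : (⨅ i ∈ I, (i : FinIndexNormal G).1).Normal := by
    constructor
    intro n hn g
    simp only [Subgroup.mem_iInf] at hn ⊢
    intro i hi
    exact i.2.1.conj_mem n (hn i hi) g
  have hfi : (⨅ i ∈ I, (i : FinIndexNormal G).1).FiniteIndex :=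
    Subgroup.finiteIndex_iInf' _ fun i _ => i.2.2
  refine ⟨⟨⨅ i ∈ I, (i : FinIndexNormal G).1, hnormal, hfi⟩, fun x hx => ?_⟩
  have hxW' : x.1 ∈ W' := by
    apply hsub
    intro i hi
    have hle : (⨅ j ∈ I, (j : FinIndexNormal G).1) ≤ i.1 :=
      biInf_le (fun j : FinIndexNormal G => j.1) hi
    have hcompat := x.2 i ⟨⨅ j ∈ I, (j : FinIndexNormal G).1, hnormal, hfi⟩ hle
    rw [← hcompat, hx, map_one]
    exact (hu i hi).2
  rw [← hWeq]
  exact hxW'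

/-- Transfer a representation along a hom between completions. -/
def transferHom (θ : ProfiniteCompletion H →* ProfiniteCompletion G)
    (ρ : G →* K) (hρ : ρ.ker.FiniteIndex) : H →* K :=
  ((extendHom ρ ⟨ρ.ker, inferInstance, hρ⟩ le_rfl).comp θ).comp (iotaCompletion H)

lemma transfer_transfer (θ : ProfiniteCompletion H →* ProfiniteCompletion G)
    (η : ProfiniteCompletion G →* ProfiniteCompletion H)
    (hθ : Continuous θ) (hinv : ∀ x, θ (η x) = x)
    (ρ : G →* K) (hρ : ρ.ker.FiniteIndex)
    (h2 : (transferHom θ ρ hρ).ker.FiniteIndex) :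
    transferHom η (transferHom θ ρ hρ) h2 = ρ := by
  set σ := transferHom θ ρ hρ with hσ
  let Nρ : FinIndexNormal G := ⟨ρ.ker, inferInstance, hρ⟩
  let Nσ : FinIndexNormal H := ⟨σ.ker, inferInstance, h2⟩
  let φ := extendHom σ Nσ le_rfl
  let ψ := (extendHom ρ Nρ le_rfl).comp θ
  have hVopen : IsOpen {x : ProfiniteCompletion G | x.1 Nρ = 1} := basic_isOpen Nρ
  have hWopen : IsOpen (θ ⁻¹' {x : ProfiniteCompletion G | x.1 Nρ = 1}) :=
    hVopen.preimage hθ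
  have h1W : (1 : ProfiniteCompletion H) ∈
      (θ ⁻¹' {x : ProfiniteCompletion G | x.1 Nρ = 1}) := by
    have h0 : θ (1 : ProfiniteCompletion H) = 1 := map_one _
    simp only [Set.mem_preimage, h0]
    rfl
  obtain ⟨M', hM'⟩ := exists_kill_of_isOpen hWopen h1W
  have heq : φ = ψ := by
    apply ext_of_kill φ ψ Nσ M'
    · exact fun x hx => extendHom_kill σ Nσ le_rfl x hx
    · intro x hx
      exact extendHom_kill ρ Nρ le_rfl (θ x) (hM' x hx)
    · intro h
      rfl
  ext g
  show φ (η (iotaCompletion G g)) = ρ g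
  rw [heq]
  show extendHom ρ Nρ le_rfl (θ (η (iotaCompletion G g))) = ρ g
  rw [hinv]
  rfl

lemma ker_conj {k : Type} [CommRing k] (ρ ρ' : G →* Matrix.SpecialLinearGroup (Fin 2) k)
    (C : Matrix.SpecialLinearGroup (Fin 2) k) (h : ∀ g, C * ρ g * C⁻¹ = ρ' g) :
    ρ'.ker = ρ.ker := by
  ext g
  simp only [MonoidHom.mem_ker, ← h g]
  constructor
  · intro hg
    have := congrArg (fun A => C⁻¹ * A * C) hg
    simpa [mul_assoc] using this
  · intro hg; rw [hg]; group

lemma transfer_conj {k : Type} [CommRing k]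
    (θ : ProfiniteCompletion H →* ProfiniteCompletion G)
    (ρ ρ' : G →* Matrix.SpecialLinearGroup (Fin 2) k)
    (hρ : ρ.ker.FiniteIndex) (hρ' : ρ'.ker.FiniteIndex)
    (C : Matrix.SpecialLinearGroup (Fin 2) k) (h : ∀ g, C * ρ g * C⁻¹ = ρ' g) :
    ∀ x, C * transferHom θ ρ hρ x * C⁻¹ = transferHom θ ρ' hρ' x := by
  intro x
  have hker : ρ'.ker = ρ.ker := ker_conj ρ ρ' C h
  set N : FinIndexNormal G := ⟨ρ.ker, inferInstance, hρ⟩ with hNdef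
  have hle : N.1 ≤ ρ'.ker := le_of_eq hker.symm
  have hN : (⟨ρ'.ker, inferInstance, hρ'⟩ : FinIndexNormal G) = N := Subtype.ext hker
  show C * extendHom ρ N le_rfl (θ (iotaCompletion H x)) * C⁻¹
      = extendHom ρ' ⟨ρ'.ker, inferInstance, hρ'⟩ le_rfl (θ (iotaCompletion H x))
  rw [extendHom_congr ρ' _ N hN le_rfl hle]
  set z := θ (iotaCompletion H x) with hz
  obtain ⟨g, hg⟩ := QuotientGroup.mk_surjective (z.1 N)
  rw [extendHom_apply ρ N le_rfl z g hg, extendHom_apply ρ' N hle z g hg, h g]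

set_option maxHeartbeats 1000000 in
set_option synthInstance.maxHeartbeats 400000 in
/-- Any representation of a finitely generated group into `SL(2, 𝔽̄_p)` has
finite-index kernel. -/
lemma finiteIndex_ker_SL2 {G : Type} [Group G] (hG : Group.FG G) {p : ℕ} [Fact p.Prime]
    (ρ : G →* Matrix.SpecialLinearGroup (Fin 2) (AlgebraicClosure (ZMod p))) :
    ρ.ker.FiniteIndex := by
  classical
  obtain ⟨S, hS, hSfin⟩ := (Subgroup.fg_iff ⊤).1 hG.out
  set k := AlgebraicClosure (ZMod p) with hk
  set E : Set k := (fun q : G × Fin 2 × Fin 2 =>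
    ((ρ q.1 : Matrix (Fin 2) (Fin 2) k) q.2.1 q.2.2)) '' (S ×ˢ Set.univ) with hE
  have hEfin : E.Finite := ((hSfin.prod Set.finite_univ).image _)
  set R := Algebra.adjoin (ZMod p) E with hR
  haveI : Module.Finite (ZMod p) R :=
    ⟨(Submodule.fg_top _).mpr (fg_adjoin_of_finite hEfin fun x _ =>
      (Algebra.IsAlgebraic.isAlgebraic (R := ZMod p) x).isIntegral)⟩
  haveI hRfin : Finite R := Module.finite_of_finite (ZMod p)
  set Hgp : Subgroup (Matrix.SpecialLinearGroup (Fin 2) k) :=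
    { carrier := {A | ∀ i j, (A : Matrix (Fin 2) (Fin 2) k) i j ∈ R},
      one_mem' := by
        intro i j
        simp only [Matrix.SpecialLinearGroup.coe_one, Matrix.one_apply]
        split_ifs
        · exact one_mem R
        · exact zero_mem R
      mul_mem' := by
        intro A B hA hB i j
        simp only [Matrix.SpecialLinearGroup.coe_mul, Matrix.mul_apply]
        exact Subalgebra.sum_mem R fun l _ => mul_mem (hA i l) (hB l j)
      inv_mem' := by
        intro A hA i j
        rw [Matrix.SpecialLinearGroup.coe_inv, Matrix.adjugate_fin_two]
        fin_cases i <;> fin_cases j <;>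
          simp only [Matrix.cons_val', Matrix.cons_val_zero, Matrix.cons_val_one,
            Matrix.head_cons, Matrix.head_fin_const, Matrix.empty_val',
            Matrix.cons_val_fin_one, Matrix.of_apply] <;>
          first
            | exact hA _ _
            | exact neg_mem (hA _ _) } with hHgp
  haveI : Finite Hgp := by
    let f : Hgp → (Fin 2 → Fin 2 → R) := fun A i j =>
      ⟨(A.1 : Matrix (Fin 2) (Fin 2) k) i j, A.2 i j⟩
    have hf : Function.Injective f := by
      intro A B hAB
      apply Subtype.ext
      apply Subtype.ext
      funext i j
      exact congrArg Subtype.val (congrFun (congrFun hAB i) j)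
    exact Finite.of_injective f hf
  have hrange : ρ.range ≤ Hgp := by
    rw [MonoidHom.range_eq_map, ← hS, MonoidHom.map_closure, Subgroup.closure_le]
    rintro _ ⟨g, hg, rfl⟩ i j
    exact Algebra.subset_adjoin ⟨(g, i, j), ⟨hg, trivial⟩, rfl⟩
  haveI : Finite ρ.range :=
    Finite.of_injective (Subgroup.inclusion hrange) (Subgroup.inclusion_injective hrange)
  constructor
  rw [Subgroup.index_ker, Nat.card_ne_zero]
  exact ⟨⟨1⟩, inferInstance⟩

end AuxMine

/-- If two finitely generated groups have isomorphic profinite completions, then their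
sets of conjugacy classes of representations into `SL(2, 𝔽̄_p)` are in bijection. -/
theorem repConjClasses_equiv_of_profinite_iso
    (Γ : Type) [Group Γ] (hΓ : Group.FG Γ) (Λ : Type) [Group Λ] (hΛ : Group.FG Λ)
    (e : ProfiniteCompletion Γ ≃* ProfiniteCompletion Λ)
    (he : Continuous e) (he' : Continuous e.symm)
    (p : ℕ) [Fact p.Prime] :
    Nonempty (RepConjClasses Γ (AlgebraicClosure (ZMod p)) ≃
      RepConjClasses Λ (AlgebraicClosure (ZMod p))) := by
  classical
  set k := AlgebraicClosure (ZMod p) with hk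
  have finΓ : ∀ ρ : Γ →* Matrix.SpecialLinearGroup (Fin 2) k, ρ.ker.FiniteIndex :=
    fun ρ => finiteIndex_ker_SL2 hΓ ρ
  have finΛ : ∀ σ : Λ →* Matrix.SpecialLinearGroup (Fin 2) k, σ.ker.FiniteIndex :=
    fun σ => finiteIndex_ker_SL2 hΛ σ
  let F : (Γ →* Matrix.SpecialLinearGroup (Fin 2) k) →
      (Λ →* Matrix.SpecialLinearGroup (Fin 2) k) :=
    fun ρ => transferHom e.symm.toMonoidHom ρ (finΓ ρ)
  let Gm : (Λ →* Matrix.SpecialLinearGroup (Fin 2) k) →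
      (Γ →* Matrix.SpecialLinearGroup (Fin 2) k) :=
    fun σ => transferHom e.toMonoidHom σ (finΛ σ)
  have hF : ∀ ρ ρ', (repConjSetoid Γ k).r ρ ρ' → (repConjSetoid Λ k).r (F ρ) (F ρ') := by
    rintro ρ ρ' ⟨C, hC⟩
    exact ⟨C, transfer_conj e.symm.toMonoidHom ρ ρ' (finΓ ρ) (finΓ ρ') C hC⟩
  have hGm : ∀ σ σ', (repConjSetoid Λ k).r σ σ' → (repConjSetoid Γ k).r (Gm σ) (Gm σ') := by
    rintro σ σ' ⟨C, hC⟩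
    exact ⟨C, transfer_conj e.toMonoidHom σ σ' (finΛ σ) (finΛ σ') C hC⟩
  have hGF : ∀ ρ, Gm (F ρ) = ρ := fun ρ =>
    transfer_transfer e.symm.toMonoidHom e.toMonoidHom he'
      (fun x => e.symm_apply_apply x) ρ (finΓ ρ) (finΛ (F ρ))
  have hFG : ∀ σ, F (Gm σ) = σ := fun σ =>
    transfer_transfer e.toMonoidHom e.symm.toMonoidHom he
      (fun x => e.apply_symm_apply x) σ (finΛ σ) (finΓ (Gm σ))
  exact ⟨{
    toFun := Quotient.map F hF
    invFun := Quotient.map Gm hGm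
    left_inv := by
      intro q
      induction q using Quotient.inductionOn with
      | h ρ => simp only [Quotient.map_mk, hGF]; rfl
    right_inv := by
      intro q
      induction q using Quotient.inductionOn with
      | h σ => simp only [Quotient.map_mk, hFG]; rfl }⟩
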